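/- Define functions h_d on ℝ∖{0} recursively by h_0(λ) = 2/s(λ) and h_d(λ) = h_{d−1}″(λ) − (2d−1)²·h_{d−1}(λ) for d ≥ 1. Then for every d ≥ 0 and every λ ≠ 0: h_d(λ) = 2^{2d+1}·(2d)!·s(λ)^{−(2d+1)}, and consequently h_d′(λ)/s(λ) = −2^{2d+1}·(2d+1)!·c(λ)·s(λ)^{−(2d+3)}. -/

import Mathlib

open scoped Nat

/-- `sh λ = e^λ - e^{-λ}`. -/
noncomputable def sh (l : ℝ) : ℝ := Real.exp l - Real.exp (-l)

/-- `ch λ = e^λ + e^{-λ}`. -/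
noncomputable def ch (l : ℝ) : ℝ := Real.exp l + Real.exp (-l)

lemma sh_ne_zero {l : ℝ} (hl : l ≠ 0) : sh l ≠ 0 := by
  unfold sh
  intro hc
  apply hl
  have : Real.exp l = Real.exp (-l) := by linarith
  have := Real.exp_injective this
  linarith

lemma hasDerivAt_sh (l : ℝ) : HasDerivAt sh (ch l) l := by
  have h1 := Real.hasDerivAt_exp l
  have h2 := (Real.hasDerivAt_exp (-l)).comp l (hasDerivAt_neg l)
  have := h1.sub h2
  simp [sh, ch, mul_comm] at this; exact this

lemma hasDerivAt_ch (l : ℝ) : HasDerivAt ch (sh l) l := by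
  have h1 := Real.hasDerivAt_exp l
  have h2 := (Real.hasDerivAt_exp (-l)).comp l (hasDerivAt_neg l)
  have := h1.add h2
  simp [sh, ch, mul_comm, sub_eq_add_neg] at this; exact this

lemma ch_sq (l : ℝ) : ch l ^ 2 = sh l ^ 2 + 4 := by
  have h : Real.exp l * Real.exp (-l) = 1 := by
    rw [← Real.exp_add]; simp
  unfold sh ch; nlinarith [h]

lemma hasDerivAt_sh_zpow (n : ℤ) {l : ℝ} (hl : l ≠ 0) :
    HasDerivAt (fun x => sh x ^ n) ((n : ℝ) * sh l ^ (n - 1) * ch l) l := by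
  have := (hasDerivAt_zpow n (sh l) (Or.inl (sh_ne_zero hl))).comp l (hasDerivAt_sh l)
  simp [mul_assoc] at this ⊢; exact this

noncomputable def F (d : ℕ) (l : ℝ) : ℝ :=
  2 ^ (2 * d + 1) * ((2 * d)! : ℝ) * (sh l) ^ (-(2 * (d : ℤ) + 1))

noncomputable def G (d : ℕ) (l : ℝ) : ℝ :=
  -(2 ^ (2 * d + 1) * ((2 * d + 1)! : ℝ)) * ch l * (sh l) ^ (-(2 * (d : ℤ) + 2))

lemma hasDerivAt_F (d : ℕ) {l : ℝ} (hl : l ≠ 0) : HasDerivAt (F d) (G d l) l := by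
  have := (hasDerivAt_sh_zpow (-(2 * (d : ℤ) + 1)) hl).const_mul
    ((2 : ℝ) ^ (2 * d + 1) * ((2 * d)! : ℝ))
  refine this.congr_deriv ?_
  have : (-(2 * (d : ℤ) + 1) - 1) = -(2 * (d : ℤ) + 2) := by ring
  rw [this]
  have hfac : ((2 * d + 1)! : ℝ) = (2 * (d:ℝ) + 1) * ((2 * d)! : ℝ) := by
    rw [Nat.factorial_succ]; push_cast; ring
  rw [G, hfac]; push_cast; ring

lemma zpow_neg_nat (s : ℝ) (n : ℕ) : s ^ (-(n : ℤ)) = (s ^ n)⁻¹ := by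
  rw [zpow_neg, zpow_natCast]

lemma hasDerivAt_G (d : ℕ) {l : ℝ} (hl : l ≠ 0) :
    HasDerivAt (G d) ((2 * (d : ℝ) + 1) ^ 2 * F d l + F (d + 1) l) l := by
  have hmul := (hasDerivAt_ch l).mul (hasDerivAt_sh_zpow (-(2 * (d : ℤ) + 2)) hl)
  have hK := hmul.const_mul (-((2 : ℝ) ^ (2 * d + 1) * ((2 * d + 1)! : ℝ)))
  have hG : G d = fun x => -((2 : ℝ) ^ (2 * d + 1) * ((2 * d + 1)! : ℝ)) *
      (ch x * sh x ^ (-(2 * (d : ℤ) + 2))) := by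
    funext x; rw [G]; ring
  rw [hG]
  refine hK.congr_deriv ?_
  set s := sh l with hs
  set c := ch l with hc
  have hsne : s ≠ 0 := sh_ne_zero hl
  have hcs : c ^ 2 = s ^ 2 + 4 := ch_sq l
  have e1 : (-(2 * (d : ℤ) + 1)) = -((2 * d + 1 : ℕ) : ℤ) := by push_cast; ring
  have e2 : (-(2 * (d : ℤ) + 2)) = -((2 * d + 2 : ℕ) : ℤ) := by push_cast; ring
  have e3 : (-(2 * (d : ℤ) + 2) - 1) = -((2 * d + 3 : ℕ) : ℤ) := by push_cast; ring
  have e4 : (-(2 * ((d:ℤ) + 1) + 1)) = -((2 * d + 3 : ℕ) : ℤ) := by push_cast; ring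
  rw [F, F, ← hs]
  push_cast
  rw [e3, e1, e2, e4]
  rw [zpow_neg_nat, zpow_neg_nat, zpow_neg_nat]
  have hf1 : ((2 * d + 1)! : ℝ) = (2 * (d:ℝ) + 1) * ((2 * d)! : ℝ) := by
    rw [Nat.factorial_succ]; push_cast; ring
  have hf2 : ((2 * (d + 1))! : ℝ) = (2 * (d:ℝ) + 2) * ((2 * d + 1)! : ℝ) := by
    rw [show 2 * (d+1) = (2*d+1) + 1 by ring, Nat.factorial_succ]; push_cast; ring
  rw [hf2, hf1]
  rw [show c * (-(2 * (d:ℝ) + 2) * (s ^ (2*d+3))⁻¹ * c)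
      = (s ^ 2 + 4) * (-(2 * (d:ℝ) + 2) * (s ^ (2*d+3))⁻¹) from by rw [← hcs]; ring]
  rw [show (2*d+3) = (2*d+1) + 2 by ring, show (2*d+2) = (2*d+1) + 1 by ring, pow_add, pow_add]
  field_simp
  ring

theorem stmt11
    (h : ℕ → ℝ → ℝ)
    (h0 : ∀ l : ℝ, h 0 l = 2 / sh l)
    (hrec : ∀ d : ℕ, ∀ l : ℝ,
      h (d + 1) l = deriv (deriv (h d)) l - (2 * ((d : ℝ) + 1) - 1) ^ 2 * h d l) :
    ∀ d : ℕ, ∀ l : ℝ, l ≠ 0 →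
      h d l = 2 ^ (2 * d + 1) * ((2 * d)! : ℝ) * (sh l) ^ (-(2 * (d : ℤ) + 1)) ∧
      deriv (h d) l / sh l =
        -(2 ^ (2 * d + 1) * ((2 * d + 1)! : ℝ)) * ch l * (sh l) ^ (-(2 * (d : ℤ) + 3)) := by
  have claim1 : ∀ d : ℕ, ∀ l : ℝ, l ≠ 0 → h d l = F d l := by
    intro d
    induction d with
    | zero =>
      intro l hl
      rw [h0, F]
      simp [div_eq_mul_inv, zpow_neg]
    | succ d IH =>
      intro l hl
      have hne : ∀ᶠ x in nhds l, x ≠ 0 := eventually_ne_nhds hl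
      have hev : h d =ᶠ[nhds l] F d := hne.mono fun x hx => IH x hx
      have hd1 : deriv (h d) =ᶠ[nhds l] G d := by
        refine hev.deriv.trans (hne.mono fun x hx => ?_)
        exact (hasDerivAt_F d hx).deriv
      have hd2 : deriv (deriv (h d)) l = deriv (G d) l := hd1.deriv.self_of_nhds
      have hd3 : deriv (G d) l = (2 * (d : ℝ) + 1) ^ 2 * F d l + F (d + 1) l :=
        (hasDerivAt_G d hl).deriv
      rw [hrec d l, hd2, hd3, IH l hl]
      ring
  intro d l hl
  have hne : ∀ᶠ x in nhds l, x ≠ 0 := eventually_ne_nhds hl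
  have hev : h d =ᶠ[nhds l] F d := hne.mono fun x hx => claim1 d x hx
  have hd1 : deriv (h d) l = G d l := by
    rw [hev.deriv.self_of_nhds]
    exact (hasDerivAt_F d hl).deriv
  refine ⟨claim1 d l hl, ?_⟩
  rw [hd1, G]
  have hsne : sh l ≠ 0 := sh_ne_zero hl
  rw [div_eq_mul_inv, ← zpow_neg_one (sh l), mul_assoc, ← zpow_add₀ hsne]
  norm_num
  ring_nf
  tauto
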